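/- Let B be a finite connected simple graph with vertex set V, m = #V ≥ 1, edge set E, and a fixed orientation o of its edges; for σ : E → Perm(Fin n) let G_σ be the associated degree-n cover on V × Fin n. For each n ∈ ℕ let μ_n be a probability measure on the finite set of functions σ : E → Perm(Fin n). Suppose that for every i ∈ ℕ there exist R ∈ ℕ and reals ν, ε > 0 and c > 0 such that for every n and all functions s, s' : V → {0,1,…,n} satisfying (a) s(v) ≤ s'(u) whenever u = v or u is adjacent to v in B, (b) Σ_v s'(v) ≤ (1+ν)·Σ_v s(v) and max_v s'(v) − min_v s(v) ≤ n/2, and (c) R ≤ Σ_v s(v) ≤ n·m/2 and min_v s(v) ≥ (1−ε)·max_v s(v), every pair of sets U ⊆ U' ⊆ V × Fin n with #U_v = s(v) and #U'_v = s'(v) for all v ∈ V satisfies μ_n{σ : Γ_{G_σ}(U) ⊆ U'} · ∏_{v∈V} C(n,s(v))·C(n, s'(v)−s(v)) ≤ c·n^{−i}. Then the family (μ_n) is pseudo-magnifying: for every i ∈ ℕ there exist γ > 0, R' ∈ ℕ and c' > 0 such that for all n, μ_n{σ : G_σ is not an (R',γ)-pseudo-magnifier} ≤ c'·n^{−i}.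 -/

import Mathlib

open scoped BigOperators

/-- The neighbourhood `Γ_G(U)` of a vertex set `U`. -/
def nbhd {W : Type*} (G : SimpleGraph W) (U : Set W) : Set W :=
  {w | ∃ u ∈ U, G.Adj u w}

/-- `G` is an `(R,γ)`-pseudo-magnifier. -/
def IsPseudoMagnifier {W : Type*} [Fintype W] (G : SimpleGraph W) (R : ℕ) (γ : ℝ) : Prop :=
  ∀ U : Set W, R ≤ U.ncard → (U.ncard : ℝ) ≤ (Fintype.card W : ℝ) / 2 →
    γ * (U.ncard : ℝ) ≤ (((nbhd G U) \ U).ncard : ℝ)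

/-- The degree-`n` cover `G_σ` of `B` determined by an orientation `o` and a
permutation assignment `σ`. -/
def coverGraph {V : Type*} {B : SimpleGraph V} (o : B.edgeSet → V × V) (n : ℕ)
    (σ : B.edgeSet → Equiv.Perm (Fin n)) : SimpleGraph (V × Fin n) :=
  SimpleGraph.fromRel (fun p q => ∃ e : B.edgeSet, o e = (p.1, q.1) ∧ q.2 = (σ e) p.2)

/-- The size of the fibre of `U ⊆ V × Fin n` over `v ∈ V`. -/
noncomputable def fibCard {V : Type*} {n : ℕ} (U : Set (V × Fin n)) (v : V) : ℕ :=
  {i : Fin n | (v, i) ∈ U}.ncard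

open scoped Classical in
/-- The probability of the event `P` under the weight function `p` on a finite type. -/
noncomputable def prob {α : Type*} [Fintype α] (p : α → ℝ) (P : α → Prop) : ℝ :=
  ∑ x : α, if P x then p x else 0

section helpers
open Finset
variable {V : Type} {n : ℕ}

lemma fib_le_n (S : Set (V × Fin n)) (v : V) : fibCard S v ≤ n := by
  have := Set.ncard_le_ncard (Set.subset_univ {i : Fin n | (v,i) ∈ S}) Set.finite_univ
  simpa [fibCard, Set.ncard_univ] using this

lemma fib_mono {S T : Set (V × Fin n)} (h : S ⊆ T) (v : V) : fibCard S v ≤ fibCard T v :=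
  Set.ncard_le_ncard (fun _ hi => h hi) (Set.toFinite _)

lemma fib_union_le (S T : Set (V × Fin n)) (v : V) :
    fibCard (S ∪ T) v ≤ fibCard S v + fibCard T v := by
  have h : {i : Fin n | (v,i) ∈ S ∪ T} = {i | (v,i) ∈ S} ∪ {i | (v,i) ∈ T} := rfl
  rw [fibCard, h]; exact Set.ncard_union_le _ _

lemma fib_le_total [Finite V] (S : Set (V × Fin n)) (v : V) : fibCard S v ≤ S.ncard :=
  Set.ncard_le_ncard_of_injOn (fun i => (v,i)) (fun _ hi => hi)
    (fun a _ b _ h => by simpa using h) (Set.toFinite _)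

lemma ncard_eq_sum_fib [Fintype V] [DecidableEq V] (S : Set (V × Fin n)) :
    S.ncard = ∑ v, fibCard S v := by
  classical
  rw [Set.ncard_eq_toFinset_card' S]
  rw [Finset.card_eq_sum_card_fiberwise (f := Prod.fst) (t := univ) (fun x _ => mem_univ _)]
  refine Finset.sum_congr rfl fun v _ => ?_
  rw [fibCard, Set.ncard_eq_toFinset_card']
  apply Finset.card_bij (fun a _ => a.2)
  · intro a ha
    simp only [mem_filter, Set.mem_toFinset] at ha ⊢
    obtain ⟨h1, h2⟩ := ha
    simp only [Set.mem_setOf_eq]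
    rwa [show ((v : V), a.2) = a by rw [← h2]]
  · intro a ha b hb hab
    simp only [mem_filter] at ha hb
    exact Prod.ext (ha.2.trans hb.2.symm) hab
  · intro i hi
    simp only [Set.mem_toFinset, Set.mem_setOf_eq] at hi
    exact ⟨(v, i), by simpa using hi, rfl⟩

lemma fib_le_of_map {S T : Set (V × Fin n)} {v u : V} (τ : Fin n → Fin n)
    (hτ : Function.Injective τ) (h : ∀ i, (v,i) ∈ S → (u, τ i) ∈ T) :
    fibCard S v ≤ fibCard T u :=
  Set.ncard_le_ncard_of_injOn τ (fun i hi => h i hi) (hτ.injOn) (Set.toFinite _)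

lemma fib_nbhd {B : SimpleGraph V} (o : B.edgeSet → V × V)
    (ho : ∀ e : B.edgeSet, Sym2.mk (o e).1 (o e).2 = (e : Sym2 V))
    (σ : B.edgeSet → Equiv.Perm (Fin n)) {u v : V} (h : B.Adj u v)
    (U : Set (V × Fin n)) :
    fibCard U v ≤ fibCard (nbhd (coverGraph o n σ) U) u := by
  have hne : u ≠ v := h.ne
  have he : s(u, v) ∈ B.edgeSet := h
  set e : B.edgeSet := ⟨s(u,v), he⟩ with hedef
  have hoe : o e = (u, v) ∨ o e = (v, u) := by
    have h2 := ho e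
    have : s((o e).1, (o e).2) = s(u, v) := h2
    rcases Sym2.eq_iff.mp this with ⟨h3, h4⟩ | ⟨h3, h4⟩
    · left; exact Prod.ext h3 h4
    · right; exact Prod.ext h3 h4
  rcases hoe with hoe | hoe
  · refine fib_le_of_map (fun i => (σ e)⁻¹ i) (Equiv.injective _) (fun i hi => ?_)
    refine ⟨(v, i), hi, ?_⟩
    rw [coverGraph, SimpleGraph.fromRel_adj]
    refine ⟨by simp [Prod.ext_iff, hne.symm], Or.inr ⟨e, by simp [hoe]⟩⟩
  · refine fib_le_of_map (fun i => σ e i) (Equiv.injective _) (fun i hi => ?_)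
    refine ⟨(v, i), hi, ?_⟩
    rw [coverGraph, SimpleGraph.fromRel_adj]
    refine ⟨by simp [Prod.ext_iff, hne.symm], Or.inl ⟨e, by simp [hoe]⟩⟩

lemma telescope_walk {B : SimpleGraph V} (s s' : V → ℕ) (g : ℝ)
    (hA : ∀ u v, B.Adj u v → (s v : ℝ) ≤ s' u) (hs' : ∀ v, (s' v : ℝ) ≤ s v + g) :
    ∀ {a b : V} (w : B.Walk a b), (s a : ℝ) ≤ s b + w.length * g := by
  intro a b w
  induction w with
  | nil => simp
  | @cons x y z hadj w ih =>
    calc (s x : ℝ) ≤ s' y := hA y x hadj.symm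
      _ ≤ s y + g := hs' y
      _ ≤ (s z + w.length * g) + g := by linarith [ih]
      _ = s z + (SimpleGraph.Walk.cons hadj w).length * g := by
          rw [SimpleGraph.Walk.length_cons]; push_cast; ring

lemma telescope [Fintype V] [DecidableEq V] {B : SimpleGraph V}
    (hconn : B.Connected) (s s' : V → ℕ) (g : ℝ) (hg : 0 ≤ g)
    (hA : ∀ u v, B.Adj u v → (s v : ℝ) ≤ s' u) (hs' : ∀ v, (s' v : ℝ) ≤ s v + g)
    (a b : V) : (s a : ℝ) ≤ s b + (Fintype.card V) * g := by
  obtain ⟨w⟩ := hconn.preconnected a b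
  have hp := w.toPath
  have hlen : (hp : B.Walk a b).length < Fintype.card V := hp.2.length_lt
  have h1 := telescope_walk s s' g hA hs' (hp : B.Walk a b)
  have hle : ((hp : B.Walk a b).length : ℝ) * g ≤ (Fintype.card V) * g := by
    apply mul_le_mul_of_nonneg_right _ hg
    exact_mod_cast hlen.le
  linarith

lemma count_pairs [Fintype V] [DecidableEq V] (s s' : V → ℕ)
    (W : Finset (Set (V × Fin n) × Set (V × Fin n)))
    (hW : ∀ w ∈ W, w.1 ⊆ w.2 ∧ (∀ v, fibCard w.1 v = s v) ∧ (∀ v, fibCard w.2 v = s' v)) :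
    W.card ≤ ∏ v, (n.choose (s v) * n.choose (s' v - s v)) := by
  classical
  have key : W.card ≤ (Fintype.piFinset (fun v : V =>
      (powersetCard (s v) (univ : Finset (Fin n))) ×ˢ
      (powersetCard (s' v - s v) (univ : Finset (Fin n))))).card := by
    apply Finset.card_le_card_of_injOn
      (fun w => fun v => ((Set.toFinite {i : Fin n | (v,i) ∈ w.1}).toFinset,
        (Set.toFinite {i : Fin n | (v,i) ∈ w.2 \ w.1}).toFinset))
    · intro w hw
      obtain ⟨hsub, h1, h2⟩ := hW w hw
      rw [Finset.mem_coe, Fintype.mem_piFinset]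
      intro v
      rw [Finset.mem_product, Finset.mem_powersetCard_univ, Finset.mem_powersetCard_univ]
      constructor
      · rw [← Set.ncard_eq_toFinset_card _]; exact h1 v
      · rw [← Set.ncard_eq_toFinset_card _]
        have hset : {i : Fin n | (v,i) ∈ w.2 \ w.1} =
            {i : Fin n | (v,i) ∈ w.2} \ {i : Fin n | (v,i) ∈ w.1} := rfl
        rw [hset, Set.ncard_diff (s := {i : Fin n | (v,i) ∈ w.1})
          (t := {i : Fin n | (v,i) ∈ w.2}) (fun i hi => hsub hi) (Set.toFinite _)]
        rw [show ({i : Fin n | (v,i) ∈ w.2}.ncard = s' v) from h2 v,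
          show ({i : Fin n | (v,i) ∈ w.1}.ncard = s v) from h1 v]
    · intro w hw w' hw' heq
      simp only [Finset.coe_mem] at *
      have hsub : w.1 ⊆ w.2 := (hW w (by simpa using hw)).1
      have hsub' : w'.1 ⊆ w'.2 := (hW w' (by simpa using hw')).1
      have hfib : ∀ v (i : Fin n), ((v,i) ∈ w.1 ↔ (v,i) ∈ w'.1) ∧
          ((v,i) ∈ w.2 \ w.1 ↔ (v,i) ∈ w'.2 \ w'.1) := by
        intro v i
        have hv := congrFun heq v
        have e1 : (Set.toFinite {i : Fin n | (v,i) ∈ w.1}).toFinset =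
            (Set.toFinite {i : Fin n | (v,i) ∈ w'.1}).toFinset := congrArg Prod.fst hv
        have e2 : (Set.toFinite {i : Fin n | (v,i) ∈ w.2 \ w.1}).toFinset =
            (Set.toFinite {i : Fin n | (v,i) ∈ w'.2 \ w'.1}).toFinset := congrArg Prod.snd hv
        constructor
        · have := congrArg (fun S => i ∈ S) e1
          simpa [Set.Finite.mem_toFinset] using this
        · have := congrArg (fun S => i ∈ S) e2
          simpa [Set.Finite.mem_toFinset] using this
      have h1 : w.1 = w'.1 := by ext ⟨v, i⟩; exact (hfib v i).1
      have h2 : w.2 = w'.2 := by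
        ext ⟨v, i⟩
        constructor
        · intro hx
          by_cases hx1 : (v,i) ∈ w.1
          · exact hsub' ((h1 ▸ hx1 : (v,i) ∈ w'.1))
          · exact (((hfib v i).2.mp ⟨hx, hx1⟩) : (v,i) ∈ w'.2 \ w'.1).1
        · intro hx
          by_cases hx1 : (v,i) ∈ w'.1
          · exact hsub (h1 ▸ hx1)
          · exact (((hfib v i).2.mpr ⟨hx, hx1⟩)).1
      exact Prod.ext h1 h2
  calc W.card ≤ _ := key
    _ = ∏ v, (n.choose (s v) * n.choose (s' v - s v)) := by
        rw [Fintype.card_piFinset]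
        refine Finset.prod_congr rfl fun v _ => ?_
        rw [Finset.card_product, Finset.card_powersetCard, Finset.card_powersetCard,
          Finset.card_univ, Fintype.card_fin]

lemma card_bounded_pairs [Fintype V] [DecidableEq V]
    (T : Finset ((V → ℕ) × (V → ℕ)))
    (hT : ∀ t ∈ T, ∀ v, t.1 v ≤ n ∧ t.2 v ≤ n) :
    T.card ≤ (n+1) ^ (2 * Fintype.card V) := by
  classical
  have key : T.card ≤ Fintype.card ((V → Fin (n+1)) × (V → Fin (n+1))) := by
    rw [← Finset.card_univ]
    apply Finset.card_le_card_of_injOn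
      (fun t => ((fun v => (⟨min (t.1 v) n, by omega⟩ : Fin (n+1))),
                 (fun v => (⟨min (t.2 v) n, by omega⟩ : Fin (n+1)))))
    · intro _ _; exact mem_univ _
    · intro t ht t' ht' heq
      simp only [Finset.mem_coe] at ht ht'
      have h1 := congrArg Prod.fst heq
      have h2 := congrArg Prod.snd heq
      refine Prod.ext (funext fun v => ?_) (funext fun v => ?_)
      · have := congrArg (fun f => (f v : Fin (n+1)).val) h1
        simp only at this
        rw [min_eq_left (hT t ht v).1, min_eq_left (hT t' ht' v).1] at this
        exact this
      · have := congrArg (fun f => (f v : Fin (n+1)).val) h2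
        simp only at this
        rw [min_eq_left (hT t ht v).2, min_eq_left (hT t' ht' v).2] at this
        exact this
  calc T.card ≤ _ := key
    _ = (n+1) ^ (2 * Fintype.card V) := by
        rw [Fintype.card_prod, Fintype.card_fun, Fintype.card_fin, two_mul, pow_add]

end helpers

/-- The counting lemma: if a family `(μ_n)` of probability measures on permutation
assignments over a finite connected base graph `B` satisfies, for every `i`, a
counting bound of the form
`μ_n{Γ_{G_σ}(U) ⊆ U'} · ∏_v C(n,s(v))·C(n,s'(v)−s(v)) ≤ c·n^{−i}`
for all fibre-size data `s, s'` satisfying conditions (a), (b), (c), then the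
family `(μ_n)` is pseudo-magnifying. -/
theorem counting_lemma_implies_pseudo_magnifying
    {V : Type} [Fintype V] [DecidableEq V] [Nonempty V]
    (B : SimpleGraph V) [DecidableRel B.Adj] (hconn : B.Connected)
    (o : B.edgeSet → V × V)
    (ho : ∀ e : B.edgeSet, Sym2.mk (o e).1 (o e).2 = (e : Sym2 V))
    (p : (n : ℕ) → (B.edgeSet → Equiv.Perm (Fin n)) → ℝ)
    (hp0 : ∀ n σ, 0 ≤ p n σ)
    (hp1 : ∀ n, ∑ σ : B.edgeSet → Equiv.Perm (Fin n), p n σ = 1)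
    (hyp : ∀ i : ℕ, ∃ (R : ℕ) (ν ε c : ℝ), 0 < ν ∧ 0 < ε ∧ 0 < c ∧
      ∀ n : ℕ, ∀ s s' : V → ℕ,
        (∀ v, s v ≤ n) → (∀ v, s' v ≤ n) →
        -- (a)
        (∀ u v : V, (u = v ∨ B.Adj u v) → s v ≤ s' u) →
        -- (b)
        ((∑ v : V, (s' v : ℝ)) ≤ (1 + ν) * ∑ v : V, (s v : ℝ)) →
        (((Finset.univ.sup' Finset.univ_nonempty s' : ℕ) : ℝ) -
          ((Finset.univ.inf' Finset.univ_nonempty s : ℕ) : ℝ) ≤ (n : ℝ) / 2) →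
        -- (c)
        (R ≤ ∑ v : V, s v) →
        ((∑ v : V, (s v : ℝ)) ≤ (n : ℝ) * (Fintype.card V : ℝ) / 2) →
        ((1 - ε) * ((Finset.univ.sup' Finset.univ_nonempty s : ℕ) : ℝ) ≤
          ((Finset.univ.inf' Finset.univ_nonempty s : ℕ) : ℝ)) →
        ∀ U U' : Set (V × Fin n), U ⊆ U' →
          (∀ v, fibCard U v = s v) → (∀ v, fibCard U' v = s' v) →
          prob (p n) (fun σ => nbhd (coverGraph o n σ) U ⊆ U') *
              ∏ v : V, ((n.choose (s v) : ℝ) * (n.choose (s' v - s v) : ℝ)) ≤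
            c / (n : ℝ) ^ i) :
    ∀ i : ℕ, ∃ (γ : ℝ) (R' : ℕ) (c' : ℝ), 0 < γ ∧ 0 < c' ∧
      ∀ n : ℕ,
        prob (p n) (fun σ => ¬ IsPseudoMagnifier (coverGraph o n σ) R' γ) ≤
          c' / (n : ℝ) ^ i := by
  classical
  intro i
  set m := Fintype.card V with hm
  have hm1 : 1 ≤ m := Fintype.card_pos
  have hmR : (1:ℝ) ≤ m := by exact_mod_cast hm1
  obtain ⟨R, ν, ε, c, hν, hε, hc, hmain⟩ := hyp (i + 2*m)
  have hm2 : (0:ℝ) < (m:ℝ)^2 := by positivity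
  set γ : ℝ := min ν (min (ε/((m:ℝ)^2)) (1/(2*((m:ℝ)^2)))) with hγdef
  have hγpos : 0 < γ := lt_min hν (lt_min (by positivity) (by positivity))
  have hγν : γ ≤ ν := min_le_left _ _
  have hγε : γ * (m:ℝ)^2 ≤ ε := by
    have h1 : γ ≤ ε/((m:ℝ)^2) := (min_le_right _ _).trans (min_le_left _ _)
    rw [le_div_iff₀ hm2] at h1; linarith
  have hγhalf : γ * (2*(m:ℝ)^2) ≤ 1 := by
    have h1 : γ ≤ 1/(2*((m:ℝ)^2)) := (min_le_right _ _).trans (min_le_right _ _)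
    rw [le_div_iff₀ (by positivity)] at h1; linarith
  set R' : ℕ := max R 1 with hR'def
  set c' : ℝ := max ((4:ℝ)^m * c) 1 with hc'def
  have hc'pos : 0 < c' := lt_of_lt_of_le one_pos (le_max_right _ _)
  refine ⟨γ, R', c', hγpos, hc'pos, ?_⟩
  intro n
  by_cases hn : n = 0
  · subst hn
    have hPM : ∀ σ : B.edgeSet → Equiv.Perm (Fin 0),
        IsPseudoMagnifier (coverGraph o 0 σ) R' γ := by
      intro σ U hU1 _
      exfalso
      have : U = ∅ := Set.eq_empty_of_isEmpty U
      rw [this, Set.ncard_empty] at hU1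
      omega
    have : prob (p 0) (fun σ => ¬ IsPseudoMagnifier (coverGraph o 0 σ) R' γ) = 0 := by
      rw [prob]
      exact Finset.sum_eq_zero fun σ _ => if_neg (by simp [hPM σ])
    rw [this]
    positivity
  · -- main case, n ≥ 1
    have hn1 : 1 ≤ n := Nat.one_le_iff_ne_zero.mpr hn
    have hnR : (1:ℝ) ≤ n := by exact_mod_cast hn1
    have hnpos : (0:ℝ) < n := by linarith
    -- the family of witness pairs
    set P : Set (V × Fin n) × Set (V × Fin n) → Prop := fun w =>
      w.1 ⊆ w.2 ∧
      ((∑ v : V, (fibCard w.2 v : ℝ)) ≤ (1 + ν) * ∑ v : V, (fibCard w.1 v : ℝ)) ∧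
      (((Finset.univ.sup' Finset.univ_nonempty (fibCard w.2) : ℕ) : ℝ) -
        ((Finset.univ.inf' Finset.univ_nonempty (fibCard w.1) : ℕ) : ℝ) ≤ (n : ℝ) / 2) ∧
      (R ≤ ∑ v : V, fibCard w.1 v) ∧
      ((∑ v : V, (fibCard w.1 v : ℝ)) ≤ (n : ℝ) * (m : ℝ) / 2) ∧
      ((1 - ε) * ((Finset.univ.sup' Finset.univ_nonempty (fibCard w.1) : ℕ) : ℝ) ≤
        ((Finset.univ.inf' Finset.univ_nonempty (fibCard w.1) : ℕ) : ℝ)) ∧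
      (∀ u v : V, (u = v ∨ B.Adj u v) → fibCard w.1 v ≤ fibCard w.2 u) with hPdef
    set Bad : Finset (Set (V × Fin n) × Set (V × Fin n)) := Finset.univ.filter P with hBdef
    -- Step A : a failure of pseudo-magnification yields a witness pair
    have stepA : ∀ σ, ¬ IsPseudoMagnifier (coverGraph o n σ) R' γ →
        ∃ w, w ∈ Bad ∧ nbhd (coverGraph o n σ) w.1 ⊆ w.2 := by
      intro σ hPM
      rw [IsPseudoMagnifier] at hPM
      push_neg at hPM
      obtain ⟨U, hU1, hU2, hU3⟩ := hPM
      set N : Set (V × Fin n) := nbhd (coverGraph o n σ) U with hNdef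
      set U' : Set (V × Fin n) := U ∪ N with hU'def
      set g : ℝ := ((N \ U).ncard : ℝ) with hgdef
      have hg0 : 0 ≤ g := by positivity
      have hgU : g < γ * U.ncard := hU3
      have hcardW : (Fintype.card (V × Fin n) : ℝ) = (m:ℝ) * n := by
        rw [Fintype.card_prod, Fintype.card_fin]; push_cast; ring
      have hU2' : (U.ncard : ℝ) ≤ (m:ℝ) * n / 2 := by rw [hcardW] at hU2; exact hU2
      set s : V → ℕ := fibCard U with hsdef
      set s' : V → ℕ := fibCard U' with hs'def
      have hsub : U ⊆ U' := Set.subset_union_left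
      have ha : ∀ u v : V, (u = v ∨ B.Adj u v) → s v ≤ s' u := by
        intro u v h
        rcases h with rfl | h
        · exact fib_mono hsub u
        · exact (fib_nbhd o ho σ h U).trans (fib_mono Set.subset_union_right u)
      have hsumU : (U.ncard : ℝ) = ∑ v, (s v : ℝ) := by
        rw [ncard_eq_sum_fib U]; push_cast; rfl
      have hsumU' : (U'.ncard : ℝ) = ∑ v, (s' v : ℝ) := by
        rw [ncard_eq_sum_fib U']; push_cast; rfl
      have hUU' : (U'.ncard : ℝ) ≤ U.ncard + g := by
        have h1 : U' = U ∪ (N \ U) := by rw [hU'def, Set.union_diff_self]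
        have h2 : U'.ncard ≤ U.ncard + (N \ U).ncard := h1 ▸ Set.ncard_union_le _ _
        rw [hgdef]; exact_mod_cast h2
      have hs'g : ∀ v, (s' v : ℝ) ≤ s v + g := by
        intro v
        have h1 : U' = U ∪ (N \ U) := by rw [hU'def, Set.union_diff_self]
        have h2 : s' v ≤ s v + fibCard (N \ U) v := by
          rw [hs'def, h1]; exact fib_union_le _ _ v
        have h3 : fibCard (N \ U) v ≤ (N \ U).ncard := fib_le_total _ v
        have : (s' v : ℝ) ≤ s v + fibCard (N \ U) v := by exact_mod_cast h2
        have h4 : (fibCard (N \ U) v : ℝ) ≤ g := by rw [hgdef]; exact_mod_cast h3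
        linarith
      have htel : ∀ a b : V, (s a : ℝ) ≤ s b + (m:ℝ) * g :=
        telescope hconn s s' g hg0 (fun u v h => by exact_mod_cast ha u v (Or.inr h)) hs'g
      -- sup/inf facts
      obtain ⟨vmax, _, hvmax⟩ := Finset.exists_mem_eq_sup' Finset.univ_nonempty s
      obtain ⟨vmin, _, hvmin⟩ := Finset.exists_mem_eq_inf' Finset.univ_nonempty s
      obtain ⟨vmax', _, hvmax'⟩ := Finset.exists_mem_eq_sup' Finset.univ_nonempty s'
      set supS : ℝ := ((Finset.univ.sup' Finset.univ_nonempty s : ℕ) : ℝ) with hsupS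
      set infS : ℝ := ((Finset.univ.inf' Finset.univ_nonempty s : ℕ) : ℝ) with hinfS
      set supS' : ℝ := ((Finset.univ.sup' Finset.univ_nonempty s' : ℕ) : ℝ) with hsupS'
      have hsup_le : ∀ v, (s v : ℝ) ≤ supS := fun v => by
        rw [hsupS]; exact_mod_cast Finset.le_sup' s (Finset.mem_univ v)
      have hsupS'le : supS' ≤ supS + g := by
        rw [hsupS', hvmax']
        calc ((s' vmax' : ℕ) : ℝ) ≤ s vmax' + g := hs'g vmax'
          _ ≤ supS + g := by linarith [hsup_le vmax']
      have hinf_ge : supS - (m:ℝ) * g ≤ infS := by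
        rw [hinfS, hvmin, hsupS, hvmax]
        linarith [htel vmax vmin]
      have hsumsup : (U.ncard : ℝ) ≤ (m:ℝ) * supS := by
        rw [hsumU]
        calc ∑ v, (s v : ℝ) ≤ ∑ _v : V, supS := Finset.sum_le_sum (fun v _ => hsup_le v)
          _ = (m:ℝ) * supS := by rw [Finset.sum_const, Finset.card_univ]; push_cast; ring
      have hsupS0 : 0 ≤ supS := le_trans (by positivity) (hsup_le (Classical.arbitrary V))
      have hgle : g ≤ γ * ((m:ℝ) * n / 2) :=
        le_trans hgU.le (mul_le_mul_of_nonneg_left hU2' hγpos.le)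
      -- verify P
      refine ⟨(U, U'), Finset.mem_filter.mpr ⟨Finset.mem_univ _, ?_, ?_, ?_, ?_, ?_, ?_, ?_⟩,
        fun x hx => Or.inr hx⟩
      · exact hsub
      · -- sum bound
        have h1 : γ * (U.ncard : ℝ) ≤ ν * U.ncard :=
          mul_le_mul_of_nonneg_right hγν (by positivity)
        calc ∑ v, (s' v : ℝ) = (U'.ncard : ℝ) := hsumU'.symm
          _ ≤ U.ncard + g := hUU'
          _ ≤ U.ncard + ν * U.ncard := by linarith
          _ = (1 + ν) * U.ncard := by ring
          _ = (1 + ν) * ∑ v, (s v : ℝ) := by rw [hsumU]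
      · -- sup' s' - inf' s ≤ n/2
        have hnpos : (0:ℝ) < n := by
          rcases Nat.eq_zero_or_pos n with h | h
          · exfalso; apply absurd hgU; push_neg
            have : U = ∅ := by
              subst h; exact Set.eq_empty_of_isEmpty U
            simp [this, hg0]
          · exact_mod_cast h
        have hmg : (m:ℝ)*g ≤ (m:ℝ)*(γ*((m:ℝ)*(n:ℝ)/2)) :=
          mul_le_mul_of_nonneg_left hgle (by positivity)
        have key : supS' - infS ≤ (m:ℝ)*g + g := by linarith only [hsupS'le, hinf_ge]
        have h6 : γ*(2*(m:ℝ)^2)*(n:ℝ) ≤ 1*(n:ℝ) :=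
          mul_le_mul_of_nonneg_right hγhalf hnpos.le
        have hmm : (m:ℝ) ≤ (m:ℝ)^2 := by nlinarith only [hmR]
        have h7 : (0:ℝ) ≤ γ*(n:ℝ)*((m:ℝ)^2 - (m:ℝ)) :=
          mul_nonneg (mul_nonneg hγpos.le hnpos.le) (by linarith only [hmm])
        have hfin : (m:ℝ)*(γ*((m:ℝ)*(n:ℝ)/2)) + γ*((m:ℝ)*(n:ℝ)/2) ≤ (n:ℝ)/2 := by
          nlinarith only [h6, h7]
        linarith only [key, hmg, hgle, hfin]
      · -- R ≤ ∑ s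
        have h1 : R ≤ U.ncard := le_trans (le_max_left R 1) hU1
        have h2 : U.ncard = ∑ v, s v := ncard_eq_sum_fib U
        rw [h2] at h1
        exact h1
      · -- ∑ s ≤ n*m/2
        rw [← hsumU]
        calc (U.ncard : ℝ) ≤ (m:ℝ) * n / 2 := hU2'
          _ = (n:ℝ) * m / 2 := by ring
      · -- balance
        have h1 : (m:ℝ) * g ≤ (m:ℝ) * (γ * U.ncard) :=
          mul_le_mul_of_nonneg_left hgU.le (by positivity)
        have h2 : (m:ℝ) * (γ * U.ncard) ≤ (m:ℝ) * (γ * ((m:ℝ) * supS)) := by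
          apply mul_le_mul_of_nonneg_left _ (by positivity)
          exact mul_le_mul_of_nonneg_left hsumsup hγpos.le
        have h3 : (m:ℝ) * (γ * ((m:ℝ) * supS)) = (γ * (m:ℝ)^2) * supS := by ring
        have h4 : (γ * (m:ℝ)^2) * supS ≤ ε * supS :=
          mul_le_mul_of_nonneg_right hγε hsupS0
        have h5 : (m:ℝ) * g ≤ ε * supS := by linarith only [h1, h2, h3, h4]
        nlinarith only [h5, hinf_ge, hsupS0]
      · exact ha
    -- abbreviations
    set F : Set (V × Fin n) × Set (V × Fin n) → ℝ := fun w =>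
      c / ((n:ℝ)^(i+2*m) * ∏ v : V,
        ((n.choose (fibCard w.1 v) : ℝ) * (n.choose (fibCard w.2 v - fibCard w.1 v) : ℝ)))
      with hFdef
    -- Step B : union bound
    have stepB : prob (p n) (fun σ => ¬ IsPseudoMagnifier (coverGraph o n σ) R' γ) ≤
        ∑ w ∈ Bad, prob (p n) (fun σ => nbhd (coverGraph o n σ) w.1 ⊆ w.2) := by
      rw [prob]
      have hswap : ∑ w ∈ Bad, prob (p n) (fun σ => nbhd (coverGraph o n σ) w.1 ⊆ w.2) =
          ∑ σ : B.edgeSet → Equiv.Perm (Fin n), ∑ w ∈ Bad,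
            (if nbhd (coverGraph o n σ) w.1 ⊆ w.2 then p n σ else 0) := by
        rw [Finset.sum_comm]
        exact Finset.sum_congr rfl fun w _ => by rw [prob]
      rw [hswap]
      apply Finset.sum_le_sum
      intro σ _
      by_cases h : ¬ IsPseudoMagnifier (coverGraph o n σ) R' γ
      · rw [if_pos h]
        obtain ⟨w, hwBad, hev⟩ := stepA σ h
        have hnn : ∀ w' : Set (V × Fin n) × Set (V × Fin n),
            0 ≤ (if nbhd (coverGraph o n σ) w'.1 ⊆ w'.2 then p n σ else 0) := by
          intro w'; split <;> simp [hp0]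
        have h2 := Finset.single_le_sum (f := fun w' =>
            (if nbhd (coverGraph o n σ) w'.1 ⊆ w'.2 then p n σ else 0))
          (fun w' _ => hnn w') hwBad
        refine le_trans ?_ h2
        simp [hev]
      · rw [if_neg h]
        exact Finset.sum_nonneg fun w _ => by split <;> simp [hp0]
    -- Step C : each witness pair has small probability
    have stepC : ∀ w ∈ Bad,
        prob (p n) (fun σ => nbhd (coverGraph o n σ) w.1 ⊆ w.2) ≤ F w := by
      intro w hw
      obtain ⟨-, hP⟩ := Finset.mem_filter.mp hw
      obtain ⟨hsub, hb1, hb2, hc1, hc2, hc3, haa⟩ := hP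
      have hprodpos : (0:ℝ) < ∏ v : V,
          ((n.choose (fibCard w.1 v) : ℝ) * (n.choose (fibCard w.2 v - fibCard w.1 v) : ℝ)) := by
        apply Finset.prod_pos
        intro v _
        apply mul_pos
        · exact_mod_cast Nat.choose_pos (fib_le_n w.1 v)
        · exact_mod_cast Nat.choose_pos (le_trans (Nat.sub_le _ _) (fib_le_n w.2 v))
      have hkey := hmain n (fibCard w.1) (fibCard w.2)
        (fun v => fib_le_n w.1 v) (fun v => fib_le_n w.2 v)
        haa hb1 hb2 hc1 hc2 hc3 w.1 w.2 hsub (fun _ => rfl) (fun _ => rfl)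
      show prob (p n) (fun σ => nbhd (coverGraph o n σ) w.1 ⊆ w.2) ≤
        c / ((n:ℝ)^(i+2*m) * ∏ v : V,
          ((n.choose (fibCard w.1 v) : ℝ) * (n.choose (fibCard w.2 v - fibCard w.1 v) : ℝ)))
      rw [← div_div, le_div_iff₀ hprodpos]
      exact hkey
    -- Step D : summing the bounds
    have stepD : ∑ w ∈ Bad, F w ≤ ((n:ℝ)+1)^(2*m) * (c / (n:ℝ)^(i+2*m)) := by
      set φ : Set (V × Fin n) × Set (V × Fin n) → (V → ℕ) × (V → ℕ) := fun w =>
        (fibCard w.1, fibCard w.2) with hφdef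
      set T : Finset ((V → ℕ) × (V → ℕ)) := Bad.image φ with hTdef
      rw [← Finset.sum_fiberwise_of_maps_to (g := φ) (t := T)
        (fun w hw => Finset.mem_image_of_mem φ hw) F]
      have inner : ∀ t ∈ T, ∑ w ∈ Bad.filter (fun w => φ w = t), F w ≤ c / (n:ℝ)^(i+2*m) := by
        intro t ht
        obtain ⟨w₀, hw₀Bad, hw₀⟩ := Finset.mem_image.mp ht
        have ht1n : ∀ v, t.1 v ≤ n := fun v => by
          rw [← hw₀]; exact fib_le_n w₀.1 v
        have ht2n : ∀ v, t.2 v ≤ n := fun v => by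
          rw [← hw₀]; exact fib_le_n w₀.2 v
        set Wt : ℕ := ∏ v : V, (n.choose (t.1 v) * n.choose (t.2 v - t.1 v)) with hWtdef
        have hWtpos : 0 < Wt := by
          apply Finset.prod_pos
          intro v _
          exact Nat.mul_pos (Nat.choose_pos (ht1n v))
            (Nat.choose_pos (le_trans (Nat.sub_le _ _) (ht2n v)))
        have hconst : ∀ w ∈ Bad.filter (fun w => φ w = t),
            F w = c / ((n:ℝ)^(i+2*m) * Wt) := by
          intro w hw
          obtain ⟨-, hφw⟩ := Finset.mem_filter.mp hw
          have e1 : fibCard w.1 = t.1 := congrArg Prod.fst hφw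
          have e2 : fibCard w.2 = t.2 := congrArg Prod.snd hφw
          show c / ((n:ℝ)^(i+2*m) * ∏ v : V,
            ((n.choose (fibCard w.1 v) : ℝ) * (n.choose (fibCard w.2 v - fibCard w.1 v) : ℝ)))
            = c / ((n:ℝ)^(i+2*m) * (Wt:ℝ))
          rw [e1, e2, hWtdef]
          push_cast
          rfl
        rw [Finset.sum_congr rfl hconst, Finset.sum_const, nsmul_eq_mul]
        have hcount : (Bad.filter (fun w => φ w = t)).card ≤ Wt := by
          rw [hWtdef]
          apply count_pairs
          intro w hw
          obtain ⟨hwBad, hφw⟩ := Finset.mem_filter.mp hw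
          obtain ⟨-, hP⟩ := Finset.mem_filter.mp hwBad
          have e1 : fibCard w.1 = t.1 := congrArg Prod.fst hφw
          have e2 : fibCard w.2 = t.2 := congrArg Prod.snd hφw
          exact ⟨hP.1, fun v => by rw [e1], fun v => by rw [e2]⟩
        have hWtR : (0:ℝ) < (Wt:ℝ) := by exact_mod_cast hWtpos
        have hnpow : (0:ℝ) < (n:ℝ)^(i+2*m) := by positivity
        calc ((Bad.filter (fun w => φ w = t)).card : ℝ) * (c / ((n:ℝ)^(i+2*m) * Wt))
            ≤ (Wt:ℝ) * (c / ((n:ℝ)^(i+2*m) * Wt)) := by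
              apply mul_le_mul_of_nonneg_right _ (by positivity)
              exact_mod_cast hcount
          _ = c / (n:ℝ)^(i+2*m) := by field_simp
      calc ∑ t ∈ T, ∑ w ∈ Bad.filter (fun w => φ w = t), F w
          ≤ ∑ _t ∈ T, c / (n:ℝ)^(i+2*m) := Finset.sum_le_sum inner
        _ = T.card * (c / (n:ℝ)^(i+2*m)) := by rw [Finset.sum_const, nsmul_eq_mul]
        _ ≤ ((n:ℝ)+1)^(2*m) * (c / (n:ℝ)^(i+2*m)) := by
            apply mul_le_mul_of_nonneg_right _ (by positivity)
            have hbd : T.card ≤ (n+1)^(2*m) := by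
              apply card_bounded_pairs
              intro t ht
              obtain ⟨w₀, _, hw₀⟩ := Finset.mem_image.mp ht
              exact fun v => ⟨by rw [← hw₀]; exact fib_le_n w₀.1 v,
                by rw [← hw₀]; exact fib_le_n w₀.2 v⟩
            calc (T.card : ℝ) ≤ (((n+1)^(2*m) : ℕ) : ℝ) := by exact_mod_cast hbd
              _ = ((n:ℝ)+1)^(2*m) := by push_cast; ring
    -- Step E : final arithmetic
    have stepE : ((n:ℝ)+1)^(2*m) * (c / (n:ℝ)^(i+2*m)) ≤ c' / (n:ℝ)^i := by
      have h1 : ((n:ℝ)+1)^(2*m) ≤ (4:ℝ)^m * (n:ℝ)^(2*m) := by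
        have h2 : ((n:ℝ)+1) ≤ 2*n := by linarith
        calc ((n:ℝ)+1)^(2*m) ≤ (2*(n:ℝ))^(2*m) := by
              apply pow_le_pow_left₀ (by positivity) h2
          _ = (4:ℝ)^m * (n:ℝ)^(2*m) := by
              rw [mul_pow]
              congr 1
              rw [pow_mul]
              norm_num
      have hnpow2 : (0:ℝ) < (n:ℝ)^(2*m) := by positivity
      have hnpowi : (0:ℝ) < (n:ℝ)^i := by positivity
      have heq : (4:ℝ)^m * (n:ℝ)^(2*m) * (c / (n:ℝ)^(i+2*m)) = (4:ℝ)^m * c / (n:ℝ)^i := by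
        rw [pow_add]
        field_simp
      calc ((n:ℝ)+1)^(2*m) * (c / (n:ℝ)^(i+2*m))
          ≤ (4:ℝ)^m * (n:ℝ)^(2*m) * (c / (n:ℝ)^(i+2*m)) := by
            apply mul_le_mul_of_nonneg_right h1 (by positivity)
        _ = (4:ℝ)^m * c / (n:ℝ)^i := heq
        _ ≤ c' / (n:ℝ)^i := by
            exact div_le_div_of_nonneg_right (le_max_left _ _) hnpowi.le
    calc prob (p n) (fun σ => ¬ IsPseudoMagnifier (coverGraph o n σ) R' γ)
        ≤ ∑ w ∈ Bad, prob (p n) (fun σ => nbhd (coverGraph o n σ) w.1 ⊆ w.2) := stepB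
      _ ≤ ∑ w ∈ Bad, F w := Finset.sum_le_sum stepC
      _ ≤ ((n:ℝ)+1)^(2*m) * (c / (n:ℝ)^(i+2*m)) := stepD
      _ ≤ c' / (n:ℝ)^i := stepE
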